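/- Let F and G be strictly increasing continuous cumulative distribution functions on ℝ with F ≤_st G. Then the function p ↦ sup{VaR^R_p(X+Y) : (X,Y) ∈ F^o_2(F,G)} is continuous on (0,1). -/
import Mathlib
set_option linter.unusedSectionVars false
set_option maxHeartbeats 1000000


open MeasureTheory Set Filter

noncomputable section

variable {Ω : Type*} [MeasurableSpace Ω]

/-- A cumulative distribution function on `ℝ`. -/
structure IsCDF (F : ℝ → ℝ) : Prop where
  mono : Monotone F
  right_cont : ∀ x, ContinuousWithinAt F (Set.Ici x) x
  tendsto_atBot : Filter.Tendsto F Filter.atBot (nhds 0)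
  tendsto_atTop : Filter.Tendsto F Filter.atTop (nhds 1)

/-- The probability space is atomless. -/
def Atomless (μ : Measure Ω) : Prop :=
  ∀ s : Set Ω, MeasurableSet s → 0 < μ s →
    ∃ t : Set Ω, MeasurableSet t ∧ t ⊆ s ∧ 0 < μ t ∧ μ t < μ s

/-- The distribution function of a random variable. -/
def distFun (μ : Measure Ω) (X : Ω → ℝ) : ℝ → ℝ :=
  fun x => (μ {ω | X ω ≤ x}).toReal

/-- `X` is a random variable distributed according to `F`. -/
def HasCDF (μ : Measure Ω) (X : Ω → ℝ) (F : ℝ → ℝ) : Prop :=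
  Measurable X ∧ ∀ x, distFun μ X x = F x

/-- Stochastic order `F ≤_st G`, i.e. `G(x) ≤ F(x)` for all `x`. -/
def StOrder (F G : ℝ → ℝ) : Prop := ∀ x, G x ≤ F x

/-- The ordered-coupling set `F^o_2(F,G)`: `X ~ F`, `Y ~ G`, `X ≤ Y` a.s. -/
def OrderedCoupling (μ : Measure Ω) (F G : ℝ → ℝ) (X Y : Ω → ℝ) : Prop :=
  HasCDF μ X F ∧ HasCDF μ Y G ∧ ∀ᵐ ω ∂μ, X ω ≤ Y ω

/-- The directional lower (DL) coupling distribution function `D_*^{F,G}`. -/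
def DLdf (F G : ℝ → ℝ) (x y : ℝ) : ℝ :=
  if y ≤ x then G y else F x - sInf ((fun z => F z - G z) '' Set.Icc x y)

/-- `(X,Y)` is DL-coupled: its joint distribution function is `D_*^{F,G}`. -/
def IsDLCoupled (μ : Measure Ω) (F G : ℝ → ℝ) (X Y : Ω → ℝ) : Prop :=
  ∀ x y : ℝ, (μ {ω | X ω ≤ x ∧ Y ω ≤ y}).toReal = DLdf F G x y

/-- The right quantile `H^{-1}(p+) = inf {t | H t > p}`, the right
Value-at-Risk `VaR^R_p(H)` at level `p`. -/
def quantR (H : ℝ → ℝ) (p : ℝ) : ℝ := sInf {t : ℝ | p < H t}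


namespace WVC

/-- generalized inverse -/
def qtl (F : ℝ → ℝ) (u : ℝ) : ℝ := sInf {x | u ≤ F x}

section basic

variable {F : ℝ → ℝ} (hFc : Continuous F) (hFs : StrictMono F)
  (hF0 : Tendsto F atBot (nhds 0)) (hF1 : Tendsto F atTop (nhds 1))

include hFs hF1 in
lemma F_lt_one (x : ℝ) : F x < 1 := by
  have h1 : F (x+1) ≤ 1 := by
    refine ge_of_tendsto hF1 ?_
    filter_upwards [eventually_ge_atTop (x+1)] with y hy
    exact hFs.monotone hy
  linarith [hFs (show x < x + 1 by linarith)]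

include hFs hF0 in
lemma F_pos (x : ℝ) : 0 < F x := by
  have h1 : 0 ≤ F (x-1) := by
    refine le_of_tendsto hF0 ?_
    filter_upwards [eventually_le_atBot (x-1)] with y hy
    exact hFs.monotone hy
  linarith [hFs (show x - 1 < x by linarith)]

include hFc hFs hF0 hF1 in
lemma exists_preim {u : ℝ} (hu : u ∈ Ioo (0:ℝ) 1) : ∃ z, F z = u := by
  obtain ⟨x₁, hx₁⟩ : ∃ x₁, F x₁ < u := by
    have := hF0.eventually_lt_const hu.1
    exact this.exists
  obtain ⟨x₂, hx₂⟩ : ∃ x₂, u < F x₂ := by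
    have := hF1.eventually_const_lt hu.2
    exact this.exists
  have hx : x₁ ≤ x₂ := by
    by_contra h
    push_neg at h
    exact absurd (hFs h) (by linarith)
  have := intermediate_value_Icc hx hFc.continuousOn
  obtain ⟨z, _, hz⟩ := this ⟨hx₁.le, hx₂.le⟩
  exact ⟨z, hz⟩

include hFc hFs hF0 hF1 in
lemma qtl_spec {u : ℝ} (hu : u ∈ Ioo (0:ℝ) 1) : F (qtl F u) = u := by
  obtain ⟨z, hz⟩ := exists_preim hFc hFs hF0 hF1 hu
  have hset : {x | u ≤ F x} = Ici z := by
    ext x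
    simp only [mem_setOf_eq, mem_Ici]
    constructor
    · intro h
      by_contra hx
      push_neg at hx
      exact absurd (hFs hx) (by rw [hz] at *; linarith)
    · intro h
      rw [← hz]
      exact hFs.monotone h
  rw [qtl, hset, csInf_Ici, hz]

include hFc hFs hF0 hF1 in
lemma qtl_le_iff {u x : ℝ} (hu : u ∈ Ioo (0:ℝ) 1) : qtl F u ≤ x ↔ u ≤ F x := by
  have hq := qtl_spec hFc hFs hF0 hF1 hu
  constructor
  · intro h
    rw [← hq]
    exact hFs.monotone h
  · intro h
    by_contra hc
    push_neg at hc
    have := hFs hc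
    rw [hq] at this
    linarith

include hFc hFs hF0 hF1 in
lemma le_qtl_iff {u x : ℝ} (hu : u ∈ Ioo (0:ℝ) 1) : x ≤ qtl F u ↔ F x ≤ u := by
  have hq := qtl_spec hFc hFs hF0 hF1 hu
  constructor
  · intro h
    rw [← hq]
    exact hFs.monotone h
  · intro h
    by_contra hc
    push_neg at hc
    have := hFs hc
    rw [hq] at this
    linarith

include hFc hFs hF0 hF1 in
lemma lt_qtl_iff {u x : ℝ} (hu : u ∈ Ioo (0:ℝ) 1) : x < qtl F u ↔ F x < u := by
  rw [← not_le, ← not_le, qtl_le_iff hFc hFs hF0 hF1 hu]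


include hFs hF0 hF1 in
omit hF1 in
lemma qtl_F (x : ℝ) : qtl F (F x) = x := by
  have hset : {y | F x ≤ F y} = Ici x := by
    ext y
    simp only [mem_setOf_eq, mem_Ici]
    exact ⟨fun h => by by_contra hc; push_neg at hc; linarith [hFs hc],
      fun h => hFs.monotone h⟩
  rw [qtl, hset, csInf_Ici]

include hFs hF0 in
lemma qtl_junk_le {u : ℝ} (hu : u ≤ 0) : qtl F u = 0 := by
  have hset : {x | u ≤ F x} = univ := by
    ext x
    simp only [mem_setOf_eq, mem_univ, iff_true]
    exact le_trans hu (F_pos hFs hF0 x).le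
  rw [qtl, hset]
  have hnb : ¬ BddBelow (univ : Set ℝ) := by
    rintro ⟨b, hb⟩
    have := hb (mem_univ (b - 1))
    linarith
  rw [csInf_of_not_bddBelow hnb, Real.sInf_empty]

include hFs hF1 in
lemma qtl_junk_ge {u : ℝ} (hu : 1 ≤ u) : qtl F u = 0 := by
  have hset : {x | u ≤ F x} = (∅ : Set ℝ) := by
    ext x
    simp only [mem_setOf_eq, mem_empty_iff_false, iff_false, not_le]
    exact lt_of_lt_of_le (F_lt_one hFs hF1 x) hu
  rw [qtl, hset, Real.sInf_empty]

include hFc hFs hF0 hF1 in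
lemma qtl_measurable : Measurable (qtl F) := by
  apply measurable_of_Iic
  intro c
  by_cases h0 : (0:ℝ) ≤ c
  · have hset : qtl F ⁻¹' (Iic c) = (Ioo 0 1 ∩ Iic (F c)) ∪ (Iic 0 ∪ Ici 1) := by
      ext u
      simp only [mem_preimage, mem_Iic, mem_union, mem_inter_iff, mem_Ioo, mem_Iic, mem_Ici]
      constructor
      · intro h
        rcases le_or_gt u 0 with hu | hu
        · exact Or.inr (Or.inl hu)
        rcases le_or_gt 1 u with hu1 | hu1
        · exact Or.inr (Or.inr hu1)
        exact Or.inl ⟨⟨hu, hu1⟩, (qtl_le_iff hFc hFs hF0 hF1 ⟨hu, hu1⟩).mp h⟩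
      · rintro (⟨hu, h⟩ | (h | h))
        · exact (qtl_le_iff hFc hFs hF0 hF1 hu).mpr h
        · rw [qtl_junk_le hFs hF0 h]; exact h0
        · rw [qtl_junk_ge hFs hF1 h]; exact h0
    rw [hset]
    exact ((measurableSet_Ioo.inter measurableSet_Iic).union
      (measurableSet_Iic.union measurableSet_Ici))
  · have hset : qtl F ⁻¹' (Iic c) = Ioo 0 1 ∩ Iic (F c) := by
      ext u
      simp only [mem_preimage, mem_Iic, mem_inter_iff, mem_Ioo]
      constructor
      · intro h
        rcases le_or_gt u 0 with hu | hu
        · rw [qtl_junk_le hFs hF0 hu] at h; exact absurd h h0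
        rcases le_or_gt 1 u with hu1 | hu1
        · rw [qtl_junk_ge hFs hF1 hu1] at h; exact absurd h h0
        exact ⟨⟨hu, hu1⟩, (qtl_le_iff hFc hFs hF0 hF1 ⟨hu, hu1⟩).mp h⟩
      · rintro ⟨hu, h⟩
        exact (qtl_le_iff hFc hFs hF0 hF1 hu).mpr h
    rw [hset]
    exact measurableSet_Ioo.inter measurableSet_Iic

include hFc hFs hF0 hF1 in
lemma qtl_mono {u v : ℝ} (hu : u ∈ Ioo (0:ℝ) 1) (hv : v ∈ Ioo (0:ℝ) 1) (huv : u ≤ v) :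
    qtl F u ≤ qtl F v := by
  rw [qtl_le_iff hFc hFs hF0 hF1 hu, qtl_spec hFc hFs hF0 hF1 hv]
  exact huv

include hFc hFs hF0 hF1 in
lemma qtl_continuousOn : ContinuousOn (qtl F) (Ioo (0:ℝ) 1) := by
  intro b0 hb0
  apply ContinuousAt.continuousWithinAt
  rw [Metric.continuousAt_iff]
  intro ε hε
  set z0 := qtl F b0 with hz0
  have hGz0 : F z0 = b0 := qtl_spec hFc hFs hF0 hF1 hb0
  set ε' := ε/2 with hε'
  have hε'pos : 0 < ε' := by positivity
  have h1 : F (z0 - ε') < b0 := by rw [← hGz0]; exact hFs (by linarith)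
  have h2 : b0 < F (z0 + ε') := by rw [← hGz0]; exact hFs (by linarith)
  refine ⟨min (b0 - F (z0 - ε')) (F (z0 + ε') - b0), by simp [h1, h2], ?_⟩
  intro b hb
  rw [Real.dist_eq] at hb ⊢
  have hb1 : F (z0 - ε') < b := by
    have := abs_lt.mp hb
    have := min_le_left (b0 - F (z0 - ε')) (F (z0 + ε') - b0)
    linarith [this, (abs_lt.mp hb).1]
  have hb2 : b < F (z0 + ε') := by
    have := min_le_right (b0 - F (z0 - ε')) (F (z0 + ε') - b0)
    linarith [this, (abs_lt.mp hb).2]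
  have hbIoo : b ∈ Ioo (0:ℝ) 1 :=
    ⟨lt_trans (F_pos hFs hF0 _) hb1, lt_trans hb2 (F_lt_one hFs hF1 _)⟩
  have hup : qtl F b ≤ z0 + ε' := (qtl_le_iff hFc hFs hF0 hF1 hbIoo).mpr hb2.le
  have hlo : z0 - ε' < qtl F b := by
    rw [lt_qtl_iff hFc hFs hF0 hF1 hbIoo]
    exact hb1
  rw [abs_lt]
  constructor <;> [linarith; linarith]

end basic


section Lb

variable (F G : ℝ → ℝ)

/-- the lower-bound function `L(t)` -/
def Lb (t : ℝ) : ℝ := sSup {v | ∃ x, x ≤ t/2 ∧ v = F x + G (t-x) - F (t-x)}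

variable {F G}
variable (hFc : Continuous F) (hFs : StrictMono F)
  (hF0 : Tendsto F atBot (nhds 0)) (hF1 : Tendsto F atTop (nhds 1))
  (hGc : Continuous G) (hGs : StrictMono G)
  (hG0 : Tendsto G atBot (nhds 0)) (hG1 : Tendsto G atTop (nhds 1))
  (hst : ∀ x, G x ≤ F x)

include hFs hst in
lemma Lb_bddAbove (t : ℝ) :
    ∀ v ∈ {v | ∃ x, x ≤ t/2 ∧ v = F x + G (t-x) - F (t-x)}, v ≤ F (t/2) := by
  rintro v ⟨x, hx, rfl⟩
  have h1 : G (t-x) ≤ F (t-x) := hst _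
  have h2 : F x ≤ F (t/2) := hFs.monotone hx
  linarith

lemma Lb_nonempty (t : ℝ) :
    (G (t/2) : ℝ) ∈ {v | ∃ x, x ≤ t/2 ∧ v = F x + G (t-x) - F (t-x)} := by
  refine ⟨t/2, le_refl _, ?_⟩
  have : t - t/2 = t/2 := by ring
  rw [this]; ring

include hFs hst in
lemma Lb_ge {t x : ℝ} (hx : x ≤ t/2) : F x + G (t-x) - F (t-x) ≤ Lb F G t :=
  le_csSup ⟨F (t/2), Lb_bddAbove hFs hst t⟩ ⟨x, hx, rfl⟩

include hFs hst in
lemma G_le_Lb (t : ℝ) : G (t/2) ≤ Lb F G t :=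
  le_csSup ⟨F (t/2), Lb_bddAbove hFs hst t⟩ (Lb_nonempty t)

include hFs hst in
lemma Lb_le_F (t : ℝ) : Lb F G t ≤ F (t/2) :=
  csSup_le ⟨_, Lb_nonempty t⟩ (Lb_bddAbove hFs hst t)

include hFs hGs hst in
lemma Lb_mono : Monotone (Lb F G) := by
  intro t t' htt'
  apply csSup_le ⟨_, Lb_nonempty t⟩
  rintro v ⟨x, hx, rfl⟩
  set δ := t' - t with hδ
  have hδ0 : 0 ≤ δ := by simp [hδ]; linarith
  rcases le_or_gt x (t/2 - δ/2) with hc | hc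
  · -- shift x by δ
    have hmem : x + δ ≤ t'/2 := by simp [hδ] at *; linarith
    have : F x + G (t-x) - F (t-x) ≤ F (x+δ) + G (t'-(x+δ)) - F (t'-(x+δ)) := by
      have h1 : t' - (x + δ) = t - x := by simp [hδ]; ring
      rw [h1]
      have := hFs.monotone (show x ≤ x + δ by linarith)
      linarith
    exact le_trans this (Lb_ge hFs hst hmem)
  · -- x close to t/2
    have h1 : F x ≤ F (t - x) := hFs.monotone (by linarith)
    have h2 : G (t - x) ≤ G (t'/2) := hGs.monotone (by simp [hδ] at *; linarith)
    have : F x + G (t-x) - F (t-x) ≤ G (t'/2) := by linarith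
    exact le_trans this (G_le_Lb hFs hst t')

include hFc hFs hF0 hF1 hGc hGs hG0 hG1 hst in
lemma Lb_strictMono : StrictMono (Lb F G) := by
  intro t t' htt'
  rcases lt_or_ge (Lb F G t) (Lb F G t') with h | h
  · exact h
  exfalso
  have heq : Lb F G t = Lb F G t' :=
    le_antisymm (Lb_mono hFs hGs hst htt'.le) h
  set c := Lb F G t with hc
  -- basic bounds on c
  have hcpos : 0 < c := lt_of_lt_of_le (F_pos hGs hG0 (t/2)) (G_le_Lb hFs hst t)
  have hclt1 : c < 1 := lt_of_le_of_lt (Lb_le_F hFs hst t) (F_lt_one hFs hF1 (t/2))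
  -- G(t/2) < c
  have hGt2 : G (t/2) < c := by
    rcases lt_or_ge (G (t/2)) c with h' | h'
    · exact h'
    have h1 : c = G (t/2) := le_antisymm h' (G_le_Lb hFs hst t)
    have h2 : G (t/2) < G (t'/2) := hGs (by linarith)
    have h3 : G (t'/2) ≤ Lb F G t' := G_le_Lb hFs hst t'
    rw [← heq] at h3
    linarith
  set η₀ := (c - G (t/2))/2 with hη₀
  have hη₀pos : 0 < η₀ := by simp [hη₀]; linarith
  have hcη₀ : c - η₀ ∈ Ioo (0:ℝ) 1 := by
    constructor
    · have : G (t/2) > 0 := F_pos hGs hG0 _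
      simp [hη₀]; linarith
    · simp [hη₀]; linarith
  set z₀ := qtl G (c - η₀) with hz₀
  have hGz₀ : G z₀ = c - η₀ := qtl_spec hGc hGs hG0 hG1 hcη₀
  have hz₀gt : t/2 < z₀ := by
    by_contra hcon
    push_neg at hcon
    have := hGs.monotone hcon
    rw [hGz₀] at this
    simp [hη₀] at this
    linarith
  -- localize: replace t' by t + δ
  set δ := min (t' - t) (z₀ - t/2) with hδ
  have hδpos : 0 < δ := by
    simp only [hδ, lt_min_iff]
    exact ⟨by linarith, by linarith⟩
  set t'' := t + δ with ht''
  have ht''le : t'' ≤ t' := by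
    simp only [ht'', hδ]
    have := min_le_left (t' - t) (z₀ - t/2)
    linarith
  have hLt'' : Lb F G t'' = c := by
    apply le_antisymm
    · rw [heq]; exact Lb_mono hFs hGs hst ht''le
    · exact Lb_mono hFs hGs hst (by simp [ht'']; linarith)
  -- compact minimum of F(x+δ) - F x over [A, t/2]
  set A := qtl F (c - η₀) with hA
  have hFA : F A = c - η₀ := qtl_spec hFc hFs hF0 hF1 hcη₀
  have hAle : A ≤ t/2 := by
    by_contra hcon
    push_neg at hcon
    have := hFs hcon
    rw [hFA] at this
    have h5 : Lb F G t ≤ F (t/2) := Lb_le_F hFs hst t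
    rw [← hc] at h5
    linarith
  obtain ⟨x₀, hx₀mem, hx₀min⟩ :
      ∃ x₀ ∈ Icc A (t/2), ∀ x ∈ Icc A (t/2), F (x₀+δ) - F x₀ ≤ F (x+δ) - F x := by
    have hcomp : IsCompact (Icc A (t/2)) := isCompact_Icc
    have hcont : ContinuousOn (fun x => F (x+δ) - F x) (Icc A (t/2)) :=
      ((hFc.comp (continuous_id.add continuous_const)).sub hFc).continuousOn
    obtain ⟨x₀, hmem, hmin⟩ := hcomp.exists_isMinOn (nonempty_Icc.mpr hAle) hcont
    exact ⟨x₀, hmem, fun x hx => hmin hx⟩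
  set m₀ := F (x₀ + δ) - F x₀ with hm₀
  have hm₀pos : 0 < m₀ := by
    have := hFs (show x₀ < x₀ + δ by linarith)
    simp [hm₀]; linarith
  set η := min η₀ (m₀/2) with hη
  have hηpos : 0 < η := by simp [hη]; constructor <;> linarith
  -- near maximizer
  obtain ⟨v, ⟨x, hx, rfl⟩, hv⟩ :
      ∃ v ∈ {v | ∃ x, x ≤ t/2 ∧ v = F x + G (t-x) - F (t-x)}, c - η < v := by
    apply exists_lt_of_lt_csSup ⟨_, Lb_nonempty t⟩
    have hrfl : sSup {v | ∃ x, x ≤ t/2 ∧ v = F x + G (t-x) - F (t-x)} = Lb F G t := rfl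
    rw [hrfl, ← hc]
    linarith
  -- properties of x
  have hwle : F x + G (t-x) - F (t-x) ≤ F x := by
    have := hst (t - x)
    linarith
  have hFxge : c - η₀ < F x := by
    have : η ≤ η₀ := min_le_left _ _
    linarith
  have hxA : A ≤ x := by
    by_contra hcon
    push_neg at hcon
    have := hFs hcon
    rw [hFA] at this
    linarith
  have hwleG : F x + G (t-x) - F (t-x) ≤ G (t - x) := by
    have : F x ≤ F (t - x) := hFs.monotone (by linarith)
    linarith
  have hGtx : G z₀ < G (t - x) := by
    rw [hGz₀]
    have : η ≤ η₀ := min_le_left _ _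
    linarith
  have hz₀tx : z₀ < t - x := by
    by_contra hcon
    push_neg at hcon
    exact absurd (hGs.monotone hcon) (not_le.mpr hGtx)
  have hxδ : x + δ ≤ t''/2 := by
    have hδ2 : δ ≤ z₀ - t/2 := min_le_right _ _
    simp only [ht'']
    -- x < t - z₀ ≤ t - t/2 - δ... : x + δ ≤ (t+δ)/2 ⟺ 2x + δ ≤ t
    -- from z₀ < t - x : x < t - z₀ ; z₀ ≥ t/2 + δ : x < t/2 - δ
    have : x < t/2 - δ := by linarith
    linarith
  -- conclude
  have hkey : F (x+δ) + G (t''-(x+δ)) - F (t''-(x+δ)) ≤ c := by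
    rw [← hLt'']
    exact Lb_ge hFs hst hxδ
  have ht''x : t'' - (x + δ) = t - x := by simp only [ht'']; ring
  rw [ht''x] at hkey
  have hgain : m₀ ≤ F (x+δ) - F x := hx₀min x ⟨hxA, hx⟩
  have : η ≤ m₀/2 := min_le_right _ _
  linarith

end Lb


section Vb

variable (F G : ℝ → ℝ) in
/-- right inverse of `Lb` -/
def Vb (p : ℝ) : ℝ := sInf {t | p < Lb F G t}

variable {F G : ℝ → ℝ}
variable (hFc : Continuous F) (hFs : StrictMono F)
  (hF0 : Tendsto F atBot (nhds 0)) (hF1 : Tendsto F atTop (nhds 1))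
  (hGc : Continuous G) (hGs : StrictMono G)
  (hG0 : Tendsto G atBot (nhds 0)) (hG1 : Tendsto G atTop (nhds 1))
  (hst : ∀ x, G x ≤ F x)

include hFs hst hGc hGs hG0 hG1 in
lemma Vb_set_nonempty {p : ℝ} (hp : p < 1) : {t | p < Lb F G t}.Nonempty := by
  set p' := (max p 0 + 1)/2 with hp'
  have hp'mem : p' ∈ Ioo (0:ℝ) 1 := by
    constructor
    · have := le_max_right p 0
      simp only [hp']; linarith
    · have : max p 0 < 1 := max_lt hp one_pos
      simp only [hp']; linarith
  refine ⟨2 * qtl G p', ?_⟩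
  have h1 : G (2 * qtl G p' / 2) = p' := by
    rw [show 2 * qtl G p' / 2 = qtl G p' by ring]
    exact qtl_spec hGc hGs hG0 hG1 hp'mem
  have h2 : p < p' := by
    have := le_max_left p 0
    simp only [hp']; linarith
  simp only [mem_setOf_eq]
  calc p < p' := h2
    _ = G (2 * qtl G p' / 2) := h1.symm
    _ ≤ Lb F G (2 * qtl G p') := G_le_Lb hFs hst _

include hFc hFs hF0 hF1 hst in
lemma Vb_bddBelow {p : ℝ} (hp : p ∈ Ioo (0:ℝ) 1) : BddBelow {t | p < Lb F G t} := by
  refine ⟨2 * qtl F p, ?_⟩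
  intro t ht
  simp only [mem_setOf_eq] at ht
  have h1 : p < F (t/2) := lt_of_lt_of_le ht (Lb_le_F hFs hst t)
  have h2 : qtl F p ≤ t/2 := (qtl_le_iff hFc hFs hF0 hF1 hp).mpr h1.le
  linarith

include hFc hFs hF0 hF1 hst in
lemma Lb_le_of_lt_Vb {p t : ℝ} (hp : p ∈ Ioo (0:ℝ) 1) (ht : t < Vb F G p) :
    Lb F G t ≤ p := by
  by_contra hcon
  push_neg at hcon
  have : Vb F G p ≤ t := csInf_le (Vb_bddBelow hFc hFs hF0 hF1 hst hp) hcon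
  linarith

include hFc hFs hF0 hF1 hGc hGs hG0 hG1 hst in
lemma Vb_continuousAt {p₀ : ℝ} (hp : p₀ ∈ Ioo (0:ℝ) 1) :
    ContinuousAt (Vb F G) p₀ := by
  have hSM := Lb_strictMono hFc hFs hF0 hF1 hGc hGs hG0 hG1 hst
  rw [Metric.continuousAt_iff]
  intro ε hε
  set ε' := ε/2 with hε'
  have hε'pos : 0 < ε' := by positivity
  set t₁ := Vb F G p₀ - ε' with ht₁
  set t₂ := Vb F G p₀ - ε'/2 with ht₂
  have hL2 : Lb F G t₂ ≤ p₀ := Lb_le_of_lt_Vb hFc hFs hF0 hF1 hst hp (by simp only [ht₂]; linarith)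
  have hL1 : Lb F G t₁ < Lb F G t₂ := hSM (by simp only [ht₁, ht₂]; linarith)
  obtain ⟨t₃, ht₃mem, ht₃lt⟩ : ∃ t₃ ∈ {t | p₀ < Lb F G t}, t₃ < Vb F G p₀ + ε' := by
    apply exists_lt_of_csInf_lt (Vb_set_nonempty hFs hGc hGs hG0 hG1 hst hp.2)
    simp only [Vb]; linarith
  simp only [mem_setOf_eq] at ht₃mem
  have hL3lt1 : Lb F G t₃ < 1 := lt_of_le_of_lt (Lb_le_F hFs hst t₃) (F_lt_one hFs hF1 _)
  have hL1pos : 0 < Lb F G t₁ := lt_of_lt_of_le (F_pos hGs hG0 _) (G_le_Lb hFs hst t₁)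
  refine ⟨min (p₀ - Lb F G t₁) (Lb F G t₃ - p₀), by simp; constructor <;> linarith, ?_⟩
  intro q hq
  rw [Real.dist_eq] at hq
  obtain ⟨hq1, hq2⟩ := abs_lt.mp hq
  have hqlo : Lb F G t₁ < q := by
    have := min_le_left (p₀ - Lb F G t₁) (Lb F G t₃ - p₀)
    linarith
  have hqhi : q < Lb F G t₃ := by
    have := min_le_right (p₀ - Lb F G t₁) (Lb F G t₃ - p₀)
    linarith
  have hqIoo : q ∈ Ioo (0:ℝ) 1 := ⟨lt_trans hL1pos hqlo, lt_trans hqhi hL3lt1⟩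
  have hup : Vb F G q ≤ t₃ :=
    csInf_le (Vb_bddBelow hFc hFs hF0 hF1 hst hqIoo) hqhi
  have hlo : t₁ ≤ Vb F G q := by
    apply le_csInf (Vb_set_nonempty hFs hGc hGs hG0 hG1 hst hqIoo.2)
    intro s hs
    simp only [mem_setOf_eq] at hs
    have : Lb F G t₁ < Lb F G s := lt_trans hqlo hs
    exact le_of_lt (hSM.lt_iff_lt.mp this)
  rw [Real.dist_eq, abs_lt]
  constructor
  · simp only [ht₁] at hlo; linarith
  · linarith

end Vb



section prob

variable {Ω : Type*} [MeasurableSpace Ω] {μ : Measure Ω} [IsProbabilityMeasure μ]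
variable {F G : ℝ → ℝ}
variable (hFc : Continuous F) (hFs : StrictMono F)
  (hF0 : Tendsto F atBot (nhds 0)) (hF1 : Tendsto F atTop (nhds 1))
  (hGc : Continuous G) (hGs : StrictMono G)
  (hG0 : Tendsto G atBot (nhds 0)) (hG1 : Tendsto G atTop (nhds 1))
  (hst : ∀ x, G x ≤ F x)

omit [IsProbabilityMeasure μ] in
lemma null_violation {X Y : Ω → ℝ} (hord : ∀ᵐ ω ∂μ, X ω ≤ Y ω) :
    μ {ω | ¬ X ω ≤ Y ω} = 0 := by
  rw [ae_iff] at hord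
  exact hord

include hFs hst in
lemma coupling_H_ge {X Y : Ω → ℝ} (hcpl : OrderedCoupling μ F G X Y) {t x : ℝ}
    (hx : x ≤ t/2) :
    F x + G (t-x) - F (t-x) ≤ distFun μ (fun ω => X ω + Y ω) t := by
  obtain ⟨hX, hY, hord⟩ := hcpl
  set z := t - x with hz
  have hxz : x ≤ z := by simp only [hz]; linarith
  set A := {ω | X ω ≤ x} with hA
  set B := {ω | Y ω ≤ z} with hB
  set C := {ω | X ω ≤ z} with hC
  set S := {ω | X ω + Y ω ≤ t} with hS
  set N := {ω | ¬ X ω ≤ Y ω} with hN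
  have hNnull : μ N = 0 := null_violation hord
  have hBmeas : MeasurableSet B := hY.1 measurableSet_Iic
  have h1 : μ (A ∪ B) ≤ μ C := by
    calc μ (A ∪ B) ≤ μ (C ∪ N) := by
          apply measure_mono
          rintro ω (hω | hω)
          · exact Or.inl (le_trans hω hxz)
          · by_cases ho : X ω ≤ Y ω
            · exact Or.inl (le_trans ho hω)
            · exact Or.inr ho
      _ ≤ μ C + μ N := measure_union_le _ _
      _ = μ C := by rw [hNnull, add_zero]
  have h2 : μ (A ∩ B) ≤ μ S := by
    apply measure_mono
    rintro ω ⟨h₁, h₂⟩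
    simp only [hS, mem_setOf_eq]
    have : x + z = t := by simp only [hz]; ring
    have h₁' : X ω ≤ x := h₁
    have h₂' : Y ω ≤ z := h₂
    linarith
  have hkey : μ A + μ B ≤ μ C + μ S := by
    rw [← measure_union_add_inter A hBmeas]
    exact add_le_add h1 h2
  have hfin : ∀ s : Set Ω, μ s ≠ ⊤ := fun s => measure_ne_top μ s
  have hkey' : (μ A).toReal + (μ B).toReal ≤ (μ C).toReal + (μ S).toReal := by
    rw [← ENNReal.toReal_add (hfin A) (hfin B), ← ENNReal.toReal_add (hfin C) (hfin S)]
    exact ENNReal.toReal_le_toReal (ENNReal.add_ne_top.mpr ⟨hfin A, hfin B⟩)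
      (ENNReal.add_ne_top.mpr ⟨hfin C, hfin S⟩) |>.mpr hkey
  have hFx : (μ A).toReal = F x := hX.2 x
  have hGz : (μ B).toReal = G z := hY.2 z
  have hFz : (μ C).toReal = F z := hX.2 z
  have hH : (μ S).toReal = distFun μ (fun ω => X ω + Y ω) t := rfl
  rw [hFx, hGz, hFz, hH] at hkey'
  linarith

lemma coupling_H_le {X Y : Ω → ℝ} (hcpl : OrderedCoupling μ F G X Y) (t : ℝ) :
    distFun μ (fun ω => X ω + Y ω) t ≤ F (t/2) := by
  obtain ⟨hX, hY, hord⟩ := hcpl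
  have h1 : μ {ω | X ω + Y ω ≤ t} ≤ μ {ω | X ω ≤ t/2} := by
    calc μ {ω | X ω + Y ω ≤ t} ≤ μ ({ω | X ω ≤ t/2} ∪ {ω | ¬ X ω ≤ Y ω}) := by
          apply measure_mono
          intro ω hω
          simp only [mem_setOf_eq] at hω
          by_cases ho : X ω ≤ Y ω
          · exact Or.inl (by simp only [mem_setOf_eq]; linarith)
          · exact Or.inr ho
      _ ≤ μ {ω | X ω ≤ t/2} + μ {ω | ¬ X ω ≤ Y ω} := measure_union_le _ _
      _ = μ {ω | X ω ≤ t/2} := by rw [null_violation hord, add_zero]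
  have h2 : (μ {ω | X ω + Y ω ≤ t}).toReal ≤ (μ {ω | X ω ≤ t/2}).toReal :=
    ENNReal.toReal_le_toReal (measure_ne_top μ _) (measure_ne_top μ _) |>.mpr h1
  rw [← hX.2 (t/2)]
  exact h2

lemma coupling_H_ge_G {X Y : Ω → ℝ} (hcpl : OrderedCoupling μ F G X Y) (t : ℝ) :
    G (t/2) ≤ distFun μ (fun ω => X ω + Y ω) t := by
  obtain ⟨hX, hY, hord⟩ := hcpl
  have h1 : μ {ω | Y ω ≤ t/2} ≤ μ {ω | X ω + Y ω ≤ t} := by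
    calc μ {ω | Y ω ≤ t/2} ≤ μ ({ω | X ω + Y ω ≤ t} ∪ {ω | ¬ X ω ≤ Y ω}) := by
          apply measure_mono
          intro ω hω
          simp only [mem_setOf_eq] at hω
          by_cases ho : X ω ≤ Y ω
          · exact Or.inl (by simp only [mem_setOf_eq]; linarith)
          · exact Or.inr ho
      _ ≤ μ {ω | X ω + Y ω ≤ t} + μ {ω | ¬ X ω ≤ Y ω} := measure_union_le _ _
      _ = μ {ω | X ω + Y ω ≤ t} := by rw [null_violation hord, add_zero]
  have h2 := ENNReal.toReal_le_toReal (measure_ne_top μ _) (measure_ne_top μ _) |>.mpr h1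
  rw [← hY.2 (t/2)]
  exact h2

include hFc hFs hF0 hF1 hGc hGs hG0 hG1 hst in
lemma coupling_quantR_le_Vb {X Y : Ω → ℝ} (hcpl : OrderedCoupling μ F G X Y) {p : ℝ}
    (hp : p ∈ Ioo (0:ℝ) 1) :
    quantR (distFun μ (fun ω => X ω + Y ω)) p ≤ Vb F G p := by
  set H := distFun μ (fun ω => X ω + Y ω) with hH
  apply csInf_le_csInf
  · -- bddBelow of {t | p < H t}
    refine ⟨2 * qtl F p, ?_⟩
    intro s hs
    simp only [mem_setOf_eq] at hs
    have h1 : p < F (s/2) := lt_of_lt_of_le hs (coupling_H_le hcpl s)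
    have h2 : qtl F p ≤ s/2 := (qtl_le_iff hFc hFs hF0 hF1 hp).mpr h1.le
    linarith
  · exact Vb_set_nonempty hFs hGc hGs hG0 hG1 hst hp.2
  · intro t ht
    simp only [mem_setOf_eq] at ht ⊢
    have hLH : Lb F G t ≤ H t := by
      apply csSup_le ⟨_, Lb_nonempty t⟩
      rintro v ⟨x, hx, rfl⟩
      exact coupling_H_ge hFs hst hcpl hx
    exact lt_of_lt_of_le ht hLH

include hGc hGs hG0 hG1 in
lemma map_uniform {Y : Ω → ℝ} (hY : HasCDF μ Y G) :
    μ.map (fun ω => G (Y ω)) = volume.restrict (Ioo (0:ℝ) 1) := by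
  have hU : Measurable fun ω => G (Y ω) := hGc.measurable.comp hY.1
  haveI : IsFiniteMeasure (volume.restrict (Ioo (0:ℝ) 1)) := by
    constructor
    rw [Measure.restrict_apply_univ, Real.volume_Ioo]
    simp
  haveI : IsProbabilityMeasure (μ.map fun ω => G (Y ω)) :=
    Measure.isProbabilityMeasure_map hU.aemeasurable
  apply Measure.ext_of_Iic
  intro c
  rw [Measure.map_apply hU measurableSet_Iic, Measure.restrict_apply measurableSet_Iic]
  rcases le_or_gt c 0 with hc | hc
  · have h1 : (fun ω => G (Y ω)) ⁻¹' Iic c = ∅ := by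
      ext ω
      simp only [mem_preimage, mem_Iic, mem_empty_iff_false, iff_false, not_le]
      exact lt_of_le_of_lt hc (F_pos hGs hG0 _)
    have h2 : Iic c ∩ Ioo (0:ℝ) 1 = ∅ := by
      ext u
      simp only [mem_inter_iff, mem_Iic, mem_Ioo, mem_empty_iff_false, iff_false]
      rintro ⟨h1', h2', _⟩
      linarith
    rw [h1, h2]
    simp
  rcases lt_or_ge c 1 with hc1 | hc1
  · have hcIoo : c ∈ Ioo (0:ℝ) 1 := ⟨hc, hc1⟩
    have h1 : (fun ω => G (Y ω)) ⁻¹' Iic c = {ω | Y ω ≤ qtl G c} := by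
      ext ω
      simp only [mem_preimage, mem_Iic, mem_setOf_eq]
      rw [le_qtl_iff hGc hGs hG0 hG1 hcIoo]
    have h2 : Iic c ∩ Ioo (0:ℝ) 1 = Ioc 0 c := by
      ext u
      simp only [mem_inter_iff, mem_Iic, mem_Ioo, mem_Ioc]
      constructor
      · rintro ⟨h1', h2', _⟩; exact ⟨h2', h1'⟩
      · rintro ⟨h1', h2'⟩; exact ⟨h2', h1', lt_of_le_of_lt h2' hc1⟩
    rw [h1, h2, Real.volume_Ioc]
    have h3 : (μ {ω | Y ω ≤ qtl G c}).toReal = c := by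
      have := hY.2 (qtl G c)
      rw [distFun] at this
      rw [this]
      exact qtl_spec hGc hGs hG0 hG1 hcIoo
    conv_lhs => rw [← ENNReal.ofReal_toReal (measure_ne_top μ {ω | Y ω ≤ qtl G c})]
    rw [h3]
    norm_num
  · have h1 : (fun ω => G (Y ω)) ⁻¹' Iic c = univ := by
      ext ω
      simp only [mem_preimage, mem_Iic, mem_univ, iff_true]
      exact le_trans (F_lt_one hGs hG1 _).le hc1
    have h2 : Iic c ∩ Ioo (0:ℝ) 1 = Ioo 0 1 := by
      ext u
      simp only [mem_inter_iff, mem_Iic, mem_Ioo]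
      exact ⟨fun h => h.2, fun h => ⟨le_trans h.2.le hc1, h⟩⟩
    rw [h1, h2, measure_univ, Real.volume_Ioo]
    simp

omit [IsProbabilityMeasure μ] in
lemma measure_preimage_of_map {U : Ω → ℝ} (hU : Measurable U)
    (hmap : μ.map U = volume.restrict (Ioo (0:ℝ) 1)) {B : Set ℝ} (hB : MeasurableSet B) :
    μ (U ⁻¹' B) = volume (B ∩ Ioo 0 1) := by
  rw [← Measure.map_apply hU hB, hmap, Measure.restrict_apply hB]

end prob


section construction

variable {F G : ℝ → ℝ}

/-- demand profile -/
def rfn (F G : ℝ → ℝ) (t a : ℝ) (u : ℝ) : ℝ :=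
  if a < u ∧ u ≤ F (t/2) then G (t - qtl F u) else G (qtl F u)

/-- explicit cdf of the demand profile under the uniform distribution -/
def Kfn (F G : ℝ → ℝ) (t a : ℝ) (β : ℝ) : ℝ :=
  min (F (qtl G β)) a + max 0 (F (t/2) - max a (F (t - qtl G β)))
    + max 0 (F (qtl G β) - F (t/2))

variable (hFc : Continuous F) (hFs : StrictMono F)
  (hF0 : Tendsto F atBot (nhds 0)) (hF1 : Tendsto F atTop (nhds 1))
  (hGc : Continuous G) (hGs : StrictMono G)
  (hG0 : Tendsto G atBot (nhds 0)) (hG1 : Tendsto G atTop (nhds 1))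
  (hst : ∀ x, G x ≤ F x)

include hGs hG0 hG1 in
lemma rfn_mem {t a u : ℝ} (hu : u ∈ Ioo (0:ℝ) 1) : rfn F G t a u ∈ Ioo (0:ℝ) 1 := by
  rw [rfn]
  split_ifs <;> exact ⟨F_pos hGs hG0 _, F_lt_one hGs hG1 _⟩

include hFc hFs hF0 hF1 hGc hGs hG0 hG1 hst in
lemma Kfn_hall {t a β : ℝ} (ha0 : 0 < a) (haF : a < F (t/2))
    (haw : ∀ x, x ≤ t/2 → F x + G (t-x) - F (t-x) < a)
    (hβ : β ∈ Ioo (0:ℝ) 1) : β ≤ Kfn F G t a β := by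
  have haG : G (t/2) < a := by
    have := haw (t/2) le_rfl
    have ht2 : t - t/2 = t/2 := by ring
    rw [ht2] at this
    linarith
  set z := qtl G β with hz
  have hGz : G z = β := qtl_spec hGc hGs hG0 hG1 hβ
  rw [Kfn, ← hz]
  rcases le_or_gt (t/2) z with hzt | hzt
  · -- z ≥ t/2
    have hFz : F (t/2) ≤ F z := hFs.monotone hzt
    have h1 : min (F z) a = a := min_eq_right (le_trans haF.le hFz)
    have htz : t - z ≤ t/2 := by linarith
    have hFtz : F (t - z) ≤ F (t/2) := hFs.monotone htz
    have hmax : max a (F (t-z)) ≤ F (t/2) := max_le haF.le hFtz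
    have h2 : max 0 (F (t/2) - max a (F (t-z))) = F (t/2) - max a (F (t-z)) :=
      max_eq_right (by linarith)
    have h3 : max 0 (F z - F (t/2)) = F z - F (t/2) := max_eq_right (by linarith)
    rw [h1, h2, h3]
    rcases le_total (F (t-z)) a with h4 | h4
    · rw [max_eq_left h4, ← hGz]
      have := hst z
      linarith
    · rw [max_eq_right h4, ← hGz]
      have hw := haw (t-z) htz
      have htzz : t - (t - z) = z := by ring
      rw [htzz] at hw
      linarith
  · -- z < t/2
    have hFz : F z < F (t/2) := hFs hzt
    have htz : t/2 ≤ t - z := by linarith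
    have hFtz : F (t/2) ≤ F (t - z) := hFs.monotone htz
    have h2 : max 0 (F (t/2) - max a (F (t-z))) = 0 := by
      apply max_eq_left
      have : F (t - z) ≤ max a (F (t-z)) := le_max_right _ _
      linarith
    have h3 : max 0 (F z - F (t/2)) = 0 := max_eq_left (by linarith)
    rw [h2, h3, ← hGz]
    have h5 : G z < G (t/2) := hGs hzt
    have h6 : G z ≤ F z := hst z
    have h7 : G z ≤ min (F z) a := le_min h6 (by linarith)
    linarith

include hFc hFs hF0 hF1 hGc hGs hG0 hG1 in
lemma Kfn_lt_one {t a β : ℝ} (ha0 : 0 < a) (haF : a < F (t/2))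
    (hβ : β ∈ Ioo (0:ℝ) 1) : Kfn F G t a β < 1 := by
  set z := qtl G β with hz
  rw [Kfn, ← hz]
  have hFz1 : F z < 1 := F_lt_one hFs hF1 z
  have hFt21 : F (t/2) < 1 := F_lt_one hFs hF1 _
  rcases le_or_gt (t/2) z with hzt | hzt
  · have hFz : F (t/2) ≤ F z := hFs.monotone hzt
    have h1 : min (F z) a = a := min_eq_right (le_trans haF.le hFz)
    have htz : t - z ≤ t/2 := by linarith
    have hFtz : F (t - z) ≤ F (t/2) := hFs.monotone htz
    have hmax : max a (F (t-z)) ≤ F (t/2) := max_le haF.le hFtz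
    have hmaxa : a ≤ max a (F (t-z)) := le_max_left _ _
    have h2 : max 0 (F (t/2) - max a (F (t-z))) = F (t/2) - max a (F (t-z)) :=
      max_eq_right (by linarith)
    have h3 : max 0 (F z - F (t/2)) = F z - F (t/2) := max_eq_right (by linarith)
    rw [h1, h2, h3]
    linarith
  · have hFz : F z < F (t/2) := hFs hzt
    have htz : t/2 ≤ t - z := by linarith
    have hFtz : F (t/2) ≤ F (t - z) := hFs.monotone htz
    have h2 : max 0 (F (t/2) - max a (F (t-z))) = 0 := by
      apply max_eq_left
      have : F (t - z) ≤ max a (F (t-z)) := le_max_right _ _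
      linarith
    have h3 : max 0 (F z - F (t/2)) = 0 := max_eq_left (by linarith)
    rw [h2, h3]
    have : min (F z) a ≤ a := min_le_right _ _
    linarith

include hFc hFs hF0 hF1 hGc hGs hG0 hG1 in
lemma Kfn_mono {t a β β' : ℝ} (hβ : β ∈ Ioo (0:ℝ) 1) (hβ' : β' ∈ Ioo (0:ℝ) 1)
    (h : β ≤ β') : Kfn F G t a β ≤ Kfn F G t a β' := by
  have hz : qtl G β ≤ qtl G β' := qtl_mono hGc hGs hG0 hG1 hβ hβ' h
  have h1 : F (qtl G β) ≤ F (qtl G β') := hFs.monotone hz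
  have h2 : F (t - qtl G β') ≤ F (t - qtl G β) := hFs.monotone (by linarith)
  rw [Kfn, Kfn]
  gcongr <;> simp [h1, h2]

include hFc hFs hF0 hF1 hGc hGs hG0 hG1 in
lemma Kfn_continuousOn {t a : ℝ} : ContinuousOn (Kfn F G t a) (Ioo (0:ℝ) 1) := by
  have hq : ContinuousOn (qtl G) (Ioo (0:ℝ) 1) := qtl_continuousOn hGc hGs hG0 hG1
  have h1 : ContinuousOn (fun β => F (qtl G β)) (Ioo (0:ℝ) 1) := hFc.comp_continuousOn hq
  have h2 : ContinuousOn (fun β => F (t - qtl G β)) (Ioo (0:ℝ) 1) :=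
    hFc.comp_continuousOn (continuousOn_const.sub hq)
  exact ((h1.inf continuousOn_const).add
    (continuousOn_const.sup (continuousOn_const.sub (continuousOn_const.sup h2)))).add
    (continuousOn_const.sup (h1.sub continuousOn_const))

end construction


section construction2

variable {F G : ℝ → ℝ}
variable (hFc : Continuous F) (hFs : StrictMono F)
  (hF0 : Tendsto F atBot (nhds 0)) (hF1 : Tendsto F atTop (nhds 1))
  (hGc : Continuous G) (hGs : StrictMono G)
  (hG0 : Tendsto G atBot (nhds 0)) (hG1 : Tendsto G atTop (nhds 1))
  (hst : ∀ x, G x ≤ F x)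

include hFc hFs hF0 hF1 hGc hGs hG0 hG1 in
lemma rfn_vol {t a β : ℝ} (ha0 : 0 < a) (haF : a < F (t/2))
    (hβ : β ∈ Ioo (0:ℝ) 1) :
    volume ({u | rfn F G t a u ≤ β} ∩ Ioo 0 1) = ENNReal.ofReal (Kfn F G t a β) := by
  set z := qtl G β with hz
  have hGz : G z = β := qtl_spec hGc hGs hG0 hG1 hβ
  have hFt21 : F (t/2) < 1 := F_lt_one hFs hF1 _
  have hFz0 : 0 < F z := F_pos hFs hF0 z
  have hFz1 : F z < 1 := F_lt_one hFs hF1 z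
  set S1 : Set ℝ := Ioc 0 (min a (F z)) with hS1
  set S2 : Set ℝ := Ioc a (F (t/2)) ∩ Ici (F (t-z)) with hS2
  set S3 : Set ℝ := Ioo (F (t/2)) 1 ∩ Iic (F z) with hS3
  have hsplit : {u | rfn F G t a u ≤ β} ∩ Ioo 0 1 = S1 ∪ (S2 ∪ S3) := by
    ext u
    simp only [hS1, hS2, hS3, mem_inter_iff, mem_setOf_eq, mem_union, mem_Ioc, mem_Ioo,
      mem_Iic, mem_Ici, le_min_iff]
    constructor
    · rintro ⟨hr, hu0, hu1⟩
      have huIoo : u ∈ Ioo (0:ℝ) 1 := ⟨hu0, hu1⟩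
      rcases le_or_gt u a with h1 | h1
      · left
        rw [rfn, if_neg (by push_neg; intro hc; linarith)] at hr
        rw [← hGz, hGs.le_iff_le] at hr
        exact ⟨hu0, h1, (qtl_le_iff hFc hFs hF0 hF1 huIoo).mp hr⟩
      rcases le_or_gt u (F (t/2)) with h2 | h2
      · right; left
        rw [rfn, if_pos ⟨h1, h2⟩] at hr
        rw [← hGz, hGs.le_iff_le] at hr
        have h3 : t - z ≤ qtl F u := by linarith
        exact ⟨⟨h1, h2⟩, (le_qtl_iff hFc hFs hF0 hF1 huIoo).mp h3⟩
      · right; right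
        rw [rfn, if_neg (by push_neg; intro hc; exact h2)] at hr
        rw [← hGz, hGs.le_iff_le] at hr
        exact ⟨⟨h2, hu1⟩, (qtl_le_iff hFc hFs hF0 hF1 huIoo).mp hr⟩
    · rintro (⟨hu0, h1, h2⟩ | (⟨⟨h1, h2⟩, h3⟩ | ⟨⟨h1, h2⟩, h3⟩))
      · have hu1 : u < 1 := lt_of_le_of_lt h2 hFz1
        have huIoo : u ∈ Ioo (0:ℝ) 1 := ⟨hu0, hu1⟩
        refine ⟨?_, hu0, hu1⟩
        rw [rfn, if_neg (by push_neg; intro hc; linarith)]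
        rw [← hGz, hGs.le_iff_le]
        exact (qtl_le_iff hFc hFs hF0 hF1 huIoo).mpr h2
      · have hu0 : 0 < u := lt_trans ha0 h1
        have huIoo : u ∈ Ioo (0:ℝ) 1 := ⟨hu0, lt_of_le_of_lt h2 hFt21⟩
        refine ⟨?_, hu0, lt_of_le_of_lt h2 hFt21⟩
        rw [rfn, if_pos ⟨h1, h2⟩]
        rw [← hGz, hGs.le_iff_le]
        have h4 : t - z ≤ qtl F u := (le_qtl_iff hFc hFs hF0 hF1 huIoo).mpr h3
        linarith
      · have hu0 : 0 < u := by
          have := F_pos hFs hF0 (t/2)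
          linarith
        have huIoo : u ∈ Ioo (0:ℝ) 1 := ⟨hu0, h2⟩
        refine ⟨?_, hu0, h2⟩
        rw [rfn, if_neg (by push_neg; intro hc; exact h1)]
        rw [← hGz, hGs.le_iff_le]
        exact (qtl_le_iff hFc hFs hF0 hF1 huIoo).mpr h3
  rw [hsplit]
  have hd1 : Disjoint S1 (S2 ∪ S3) := by
    rw [Set.disjoint_left]
    rintro u hu1 (hu2 | hu3)
    · have h1 : u ≤ a := le_trans hu1.2 (min_le_left _ _)
      exact absurd hu2.1.1 (not_lt.mpr h1)
    · have h1 : u ≤ a := le_trans hu1.2 (min_le_left _ _)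
      have h2 := hu3.1.1
      linarith
  have hd2 : Disjoint S2 S3 := by
    rw [Set.disjoint_left]
    rintro u hu2 hu3
    have h1 := hu2.1.2
    have h2 := hu3.1.1
    linarith
  have hm2 : MeasurableSet S2 := measurableSet_Ioc.inter measurableSet_Ici
  have hm3 : MeasurableSet S3 := measurableSet_Ioo.inter measurableSet_Iic
  rw [measure_union hd1 (hm2.union hm3), measure_union hd2 hm3]
  have hv1 : volume S1 = ENNReal.ofReal (min (F z) a) := by
    rw [hS1, Real.volume_Ioc, sub_zero, min_comm]
  have hv2 : volume S2 = ENNReal.ofReal (max 0 (F (t/2) - max a (F (t-z)))) := by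
    rcases le_or_gt (F (t-z)) a with h1 | h1
    · have hset : S2 = Ioc a (F (t/2)) := by
        ext u
        simp only [hS2, mem_inter_iff, mem_Ioc, mem_Ici]
        exact ⟨fun h => h.1, fun h => ⟨h, by linarith [h.1]⟩⟩
      rw [hset, Real.volume_Ioc, max_eq_left h1, max_eq_right (by linarith)]
    · rcases le_or_gt (F (t-z)) (F (t/2)) with h2 | h2
      · have hset : S2 = Icc (F (t-z)) (F (t/2)) := by
          ext u
          simp only [hS2, mem_inter_iff, mem_Ioc, mem_Ici, mem_Icc]
          constructor
          · rintro ⟨⟨_, hb⟩, hc⟩; exact ⟨hc, hb⟩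
          · rintro ⟨hc, hb⟩; exact ⟨⟨by linarith, hb⟩, hc⟩
        rw [hset, Real.volume_Icc, max_eq_right h1.le, max_eq_right (by linarith)]
      · have hset : S2 = ∅ := by
          ext u
          simp only [hS2, mem_inter_iff, mem_Ioc, mem_Ici, mem_empty_iff_false, iff_false]
          rintro ⟨⟨_, hb⟩, hc⟩
          linarith
        rw [hset, measure_empty, max_eq_right h1.le, max_eq_left (by linarith)]
        simp
  have hv3 : volume S3 = ENNReal.ofReal (max 0 (F z - F (t/2))) := by
    rcases le_or_gt (F z) (F (t/2)) with h1 | h1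
    · have hset : S3 = ∅ := by
        ext u
        simp only [hS3, mem_inter_iff, mem_Ioo, mem_Iic, mem_empty_iff_false, iff_false]
        rintro ⟨⟨ha', _⟩, hb⟩
        linarith
      rw [hset, measure_empty, max_eq_left (by linarith)]
      simp
    · have hset : S3 = Ioc (F (t/2)) (F z) := by
        ext u
        simp only [hS3, mem_inter_iff, mem_Ioo, mem_Iic, mem_Ioc]
        constructor
        · rintro ⟨⟨ha', _⟩, hb⟩; exact ⟨ha', hb⟩
        · rintro ⟨ha', hb⟩; exact ⟨⟨ha', lt_of_le_of_lt hb hFz1⟩, hb⟩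
      rw [hset, Real.volume_Ioc, max_eq_right (by linarith)]
  rw [hv1, hv2, hv3]
  rw [← ENNReal.ofReal_add (le_max_left 0 _) (le_max_left 0 _)]
  rw [← ENNReal.ofReal_add (le_min (F_pos hFs hF0 z).le ha0.le)
    (add_nonneg (le_max_left 0 _) (le_max_left 0 _))]
  rw [Kfn, ← hz]
  congr 1
  ring

end construction2


section construction3

variable {F G : ℝ → ℝ}
variable (hFc : Continuous F) (hFs : StrictMono F)
  (hF0 : Tendsto F atBot (nhds 0)) (hF1 : Tendsto F atTop (nhds 1))
  (hGc : Continuous G) (hGs : StrictMono G)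
  (hG0 : Tendsto G atBot (nhds 0)) (hG1 : Tendsto G atTop (nhds 1))
  (hst : ∀ x, G x ≤ F x)

include hFc hFs hF0 hF1 hGc in
lemma rfn_measurable {t a : ℝ} : Measurable (rfn F G t a) := by
  have hcond : MeasurableSet {u : ℝ | a < u ∧ u ≤ F (t/2)} := by
    have h : {u : ℝ | a < u ∧ u ≤ F (t/2)} = Ioc a (F (t/2)) := by
      ext u; simp [mem_Ioc]
    rw [h]; exact measurableSet_Ioc
  exact Measurable.ite hcond
    (hGc.measurable.comp (measurable_const.sub (qtl_measurable hFc hFs hF0 hF1)))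
    (hGc.measurable.comp (qtl_measurable hFc hFs hF0 hF1))

include hFc hGc hGs hG0 hG1 in
lemma Kfn_measurable {t a : ℝ} : Measurable (Kfn F G t a) := by
  have hq : Measurable (qtl G) := qtl_measurable hGc hGs hG0 hG1
  have h1 : Measurable fun β => F (qtl G β) := hFc.measurable.comp hq
  have h2 : Measurable fun β => F (t - qtl G β) :=
    hFc.measurable.comp (measurable_const.sub hq)
  exact ((h1.min measurable_const).add
    (measurable_const.max (measurable_const.sub (measurable_const.max h2)))).add
    (measurable_const.max (h1.sub measurable_const))

include hFc hFs hF0 hF1 hGc hGs hG0 hG1 hst in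
lemma pit {t a c : ℝ} (ha0 : 0 < a) (haF : a < F (t/2))
    (haw : ∀ x, x ≤ t/2 → F x + G (t-x) - F (t-x) < a)
    (hc : c ∈ Ioo (0:ℝ) 1) :
    volume ({u | Kfn F G t a (rfn F G t a u) ≤ c} ∩ Ioo 0 1) = ENNReal.ofReal c := by
  obtain ⟨hc0, hc1⟩ := hc
  -- lower endpoint β₁
  have hc2 : c/2 ∈ Ioo (0:ℝ) 1 := ⟨by linarith, by linarith⟩
  set z₁ := min (t/2) (qtl F (c/2)) with hz₁
  set β₁ := G z₁ with hβ₁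
  have hβ₁Ioo : β₁ ∈ Ioo (0:ℝ) 1 := ⟨F_pos hGs hG0 _, F_lt_one hGs hG1 _⟩
  have hqβ₁ : qtl G β₁ = z₁ := qtl_F hGs hG0 z₁
  have hK₁ : Kfn F G t a β₁ ≤ c/2 := by
    rw [Kfn, hqβ₁]
    have h1 : z₁ ≤ t/2 := min_le_left _ _
    have hFz₁ : F z₁ ≤ c/2 := by
      have h := hFs.monotone (min_le_right (t/2) (qtl F (c/2)))
      rw [qtl_spec hFc hFs hF0 hF1 hc2] at h
      exact le_trans (hFs.monotone (le_refl z₁)) h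
    have h2 : max 0 (F (t/2) - max a (F (t - z₁))) = 0 := by
      apply max_eq_left
      have h3 : F (t/2) ≤ F (t - z₁) := hFs.monotone (by linarith)
      have h4 := le_max_right a (F (t - z₁))
      linarith
    have h3 : max 0 (F z₁ - F (t/2)) = 0 := by
      apply max_eq_left
      have := hFs.monotone h1
      linarith
    rw [h2, h3]
    have := min_le_left (F z₁) a
    linarith
  -- upper endpoint β₂
  have hc1' : (c+1)/2 ∈ Ioo (0:ℝ) 1 := ⟨by linarith, by linarith⟩
  have haIoo : a ∈ Ioo (0:ℝ) 1 := ⟨ha0, lt_trans haF (F_lt_one hFs hF1 _)⟩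
  set z₂ := max (max (t/2) (t - qtl F a)) (qtl F ((c+1)/2)) with hz₂
  set β₂ := G z₂ with hβ₂
  have hβ₂Ioo : β₂ ∈ Ioo (0:ℝ) 1 := ⟨F_pos hGs hG0 _, F_lt_one hGs hG1 _⟩
  have hqβ₂ : qtl G β₂ = z₂ := qtl_F hGs hG0 z₂
  have hK₂ : (c+1)/2 ≤ Kfn F G t a β₂ := by
    rw [Kfn, hqβ₂]
    have h1 : t/2 ≤ z₂ := le_trans (le_max_left _ _) (le_max_left _ _)
    have hFz : F (t/2) ≤ F z₂ := hFs.monotone h1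
    have hterm1 : min (F z₂) a = a := min_eq_right (by linarith)
    have h2 : t - z₂ ≤ qtl F a := by
      have h := le_trans (le_max_right (t/2) (t - qtl F a))
        (le_max_left (max (t/2) (t - qtl F a)) (qtl F ((c+1)/2)))
      have h' : t - qtl F a ≤ z₂ := h
      linarith
    have hFtz : F (t - z₂) ≤ a := by
      have h := hFs.monotone h2
      rw [qtl_spec hFc hFs hF0 hF1 haIoo] at h
      exact h
    have hterm2 : max 0 (F (t/2) - max a (F (t - z₂))) = F (t/2) - a := by
      rw [max_eq_left hFtz]
      exact max_eq_right (by linarith)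
    have hterm3 : max 0 (F z₂ - F (t/2)) = F z₂ - F (t/2) := max_eq_right (by linarith)
    rw [hterm1, hterm2, hterm3]
    have hge : (c+1)/2 ≤ F z₂ := by
      have h := hFs.monotone
        (le_max_right (max (t/2) (t - qtl F a)) (qtl F ((c+1)/2)))
      rw [qtl_spec hFc hFs hF0 hF1 hc1'] at h
      linarith
    linarith
  have hβ₁₂ : β₁ ≤ β₂ :=
    hGs.monotone (le_trans (min_le_left _ _) (le_trans (le_max_left _ _) (le_max_left _ _)))
  have hIccIoo : Icc β₁ β₂ ⊆ Ioo (0:ℝ) 1 := fun β hβ =>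
    ⟨lt_of_lt_of_le hβ₁Ioo.1 hβ.1, lt_of_le_of_lt hβ.2 hβ₂Ioo.2⟩
  have hKcont : ContinuousOn (Kfn F G t a) (Icc β₁ β₂) :=
    (Kfn_continuousOn hFc hFs hF0 hF1 hGc hGs hG0 hG1).mono hIccIoo
  -- crossing point
  obtain ⟨β₀, hβ₀mem, hβ₀⟩ : ∃ β₀ ∈ Icc β₁ β₂, Kfn F G t a β₀ = c := by
    have hIVT := intermediate_value_Icc hβ₁₂ hKcont
    have hmem : c ∈ Icc (Kfn F G t a β₁) (Kfn F G t a β₂) := ⟨by linarith, by linarith⟩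
    obtain ⟨β₀, h1, h2⟩ := hIVT hmem
    exact ⟨β₀, h1, h2⟩
  have hβ₀Ioo : β₀ ∈ Ioo (0:ℝ) 1 := hIccIoo hβ₀mem
  -- lower bound
  have hlow : ENNReal.ofReal c ≤
      volume ({u | Kfn F G t a (rfn F G t a u) ≤ c} ∩ Ioo 0 1) := by
    have h1 : volume ({u | rfn F G t a u ≤ β₀} ∩ Ioo 0 1) = ENNReal.ofReal (Kfn F G t a β₀) :=
      rfn_vol hFc hFs hF0 hF1 hGc hGs hG0 hG1 ha0 haF hβ₀Ioo
    have hsub : ({u | rfn F G t a u ≤ β₀} ∩ Ioo 0 1) ⊆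
        ({u | Kfn F G t a (rfn F G t a u) ≤ c} ∩ Ioo 0 1) := by
      rintro u ⟨hu1, hu2⟩
      refine ⟨?_, hu2⟩
      simp only [mem_setOf_eq] at hu1 ⊢
      calc Kfn F G t a (rfn F G t a u) ≤ Kfn F G t a β₀ :=
            Kfn_mono hFc hFs hF0 hF1 hGc hGs hG0 hG1 (rfn_mem hGs hG0 hG1 hu2) hβ₀Ioo hu1
        _ = c := hβ₀
    calc ENNReal.ofReal c = ENNReal.ofReal (Kfn F G t a β₀) := by rw [hβ₀]
      _ = volume ({u | rfn F G t a u ≤ β₀} ∩ Ioo 0 1) := h1.symm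
      _ ≤ _ := measure_mono hsub
  -- upper bound
  have hup : ∀ ε, 0 < ε →
      volume ({u | Kfn F G t a (rfn F G t a u) ≤ c} ∩ Ioo 0 1) ≤ ENNReal.ofReal (c + ε) := by
    intro ε hε
    have hcK₂ : c < Kfn F G t a β₂ := by linarith
    set v := min (c + ε/2) ((c + Kfn F G t a β₂)/2) with hv
    have hvc : c < v := lt_min (by linarith) (by linarith)
    have hvK₂ : v ≤ Kfn F G t a β₂ := le_trans (min_le_right _ _) (by linarith)
    obtain ⟨β', hβ'mem, hβ'val⟩ : ∃ β' ∈ Icc β₀ β₂, Kfn F G t a β' = v := by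
      have hIVT := intermediate_value_Icc hβ₀mem.2
        (hKcont.mono (Icc_subset_Icc hβ₀mem.1 le_rfl))
      obtain ⟨β', h1, h2⟩ := hIVT ⟨by rw [hβ₀]; exact hvc.le, hvK₂⟩
      exact ⟨β', h1, h2⟩
    have hβ'Ioo : β' ∈ Ioo (0:ℝ) 1 := hIccIoo (Icc_subset_Icc hβ₀mem.1 le_rfl hβ'mem)
    have hsub : ({u | Kfn F G t a (rfn F G t a u) ≤ c} ∩ Ioo 0 1) ⊆
        ({u | rfn F G t a u ≤ β'} ∩ Ioo 0 1) := by
      rintro u ⟨hu1, hu2⟩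
      refine ⟨?_, hu2⟩
      simp only [mem_setOf_eq] at hu1 ⊢
      by_contra hcon
      push_neg at hcon
      have hmono : Kfn F G t a β' ≤ Kfn F G t a (rfn F G t a u) :=
        Kfn_mono hFc hFs hF0 hF1 hGc hGs hG0 hG1 hβ'Ioo (rfn_mem hGs hG0 hG1 hu2) hcon.le
      rw [hβ'val] at hmono
      linarith
    calc volume ({u | Kfn F G t a (rfn F G t a u) ≤ c} ∩ Ioo 0 1)
        ≤ volume ({u | rfn F G t a u ≤ β'} ∩ Ioo 0 1) := measure_mono hsub
      _ = ENNReal.ofReal (Kfn F G t a β') :=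
          rfn_vol hFc hFs hF0 hF1 hGc hGs hG0 hG1 ha0 haF hβ'Ioo
      _ ≤ ENNReal.ofReal (c + ε) := by
          apply ENNReal.ofReal_le_ofReal
          rw [hβ'val]
          exact le_trans (min_le_left _ _) (by linarith)
  -- conclude
  have hne : volume ({u | Kfn F G t a (rfn F G t a u) ≤ c} ∩ Ioo 0 1) ≠ ⊤ := by
    apply ne_top_of_le_ne_top ?_ (measure_mono inter_subset_right)
    rw [Real.volume_Ioo]
    exact ENNReal.ofReal_ne_top
  apply le_antisymm ?_ hlow
  have htr : (volume ({u | Kfn F G t a (rfn F G t a u) ≤ c} ∩ Ioo 0 1)).toReal ≤ c := by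
    apply le_of_forall_pos_le_add
    intro ε hε
    have h := hup ε hε
    calc (volume ({u | Kfn F G t a (rfn F G t a u) ≤ c} ∩ Ioo 0 1)).toReal
        ≤ (ENNReal.ofReal (c + ε)).toReal := ENNReal.toReal_mono ENNReal.ofReal_ne_top h
      _ = c + ε := ENNReal.toReal_ofReal (by linarith)
  calc volume ({u | Kfn F G t a (rfn F G t a u) ≤ c} ∩ Ioo 0 1)
      = ENNReal.ofReal ((volume ({u | Kfn F G t a (rfn F G t a u) ≤ c} ∩ Ioo 0 1)).toReal) :=
        (ENNReal.ofReal_toReal hne).symm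
    _ ≤ ENNReal.ofReal c := ENNReal.ofReal_le_ofReal htr

end construction3


section excoupling

variable {Ω : Type*} [MeasurableSpace Ω] {μ : Measure Ω} [IsProbabilityMeasure μ]
variable {F G : ℝ → ℝ}
variable (hFc : Continuous F) (hFs : StrictMono F)
  (hF0 : Tendsto F atBot (nhds 0)) (hF1 : Tendsto F atTop (nhds 1))
  (hGc : Continuous G) (hGs : StrictMono G)
  (hG0 : Tendsto G atBot (nhds 0)) (hG1 : Tendsto G atTop (nhds 1))
  (hst : ∀ x, G x ≤ F x)

include hFc hFs hF0 hF1 in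
lemma cdf_of_qtl_comp {U : Ω → ℝ} (hU : Measurable U)
    (hmap : μ.map U = volume.restrict (Ioo 0 1)) :
    HasCDF μ (fun ω => qtl F (U ω)) F := by
  constructor
  · exact (qtl_measurable hFc hFs hF0 hF1).comp hU
  · intro x
    show (μ {ω | qtl F (U ω) ≤ x}).toReal = F x
    have hB : MeasurableSet {v : ℝ | qtl F v ≤ x} :=
      (qtl_measurable hFc hFs hF0 hF1) measurableSet_Iic
    have h1 : {ω | qtl F (U ω) ≤ x} = U ⁻¹' {v | qtl F v ≤ x} := rfl
    rw [h1, measure_preimage_of_map hU hmap hB]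
    have h2 : {v : ℝ | qtl F v ≤ x} ∩ Ioo 0 1 = Ioc 0 (F x) := by
      ext u
      simp only [mem_inter_iff, mem_setOf_eq, mem_Ioo, mem_Ioc]
      constructor
      · rintro ⟨h3, h4, h5⟩
        exact ⟨h4, (qtl_le_iff hFc hFs hF0 hF1 ⟨h4, h5⟩).mp h3⟩
      · rintro ⟨h4, h5⟩
        have h6 : u < 1 := lt_of_le_of_lt h5 (F_lt_one hFs hF1 x)
        exact ⟨(qtl_le_iff hFc hFs hF0 hF1 ⟨h4, h6⟩).mpr h5, h4, h6⟩
    rw [h2, Real.volume_Ioc, sub_zero, ENNReal.toReal_ofReal (F_pos hFs hF0 x).le]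

omit [IsProbabilityMeasure μ] in
lemma ae_mem_Ioo {U : Ω → ℝ} (hU : Measurable U)
    (hmap : μ.map U = volume.restrict (Ioo 0 1)) :
    ∀ᵐ ω ∂μ, U ω ∈ Ioo (0:ℝ) 1 := by
  rw [ae_iff]
  have h1 : {ω | ¬ U ω ∈ Ioo (0:ℝ) 1} = U ⁻¹' (Ioo 0 1)ᶜ := rfl
  rw [h1, measure_preimage_of_map hU hmap measurableSet_Ioo.compl, compl_inter_self]
  exact measure_empty

include hFc hFs hF0 hF1 hGc hGs hG0 hG1 hst in
lemma quantR_ge_of_small {X Y : Ω → ℝ} (hcpl : OrderedCoupling μ F G X Y) {t p : ℝ}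
    (hp : p ∈ Ioo (0:ℝ) 1)
    (hsmall : ∀ s, s < t → distFun μ (fun ω => X ω + Y ω) s ≤ p) :
    t ≤ quantR (distFun μ (fun ω => X ω + Y ω)) p := by
  rw [quantR]
  apply le_csInf
  · set p'' := (p+1)/2 with hp''
    have hp''Ioo : p'' ∈ Ioo (0:ℝ) 1 := ⟨by simp [hp'']; linarith [hp.1], by simp [hp'']; linarith [hp.2]⟩
    refine ⟨2 * qtl G p'', ?_⟩
    simp only [mem_setOf_eq]
    have h1 := coupling_H_ge_G hcpl (2 * qtl G p'')
    have heq : G (2 * qtl G p'' / 2) = p'' := by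
      rw [show 2 * qtl G p'' / 2 = qtl G p'' by ring, qtl_spec hGc hGs hG0 hG1 hp''Ioo]
    rw [heq] at h1
    have : p < p'' := by simp [hp'']; linarith [hp.2]
    linarith
  · intro s hs
    by_contra hcon
    push_neg at hcon
    have := hsmall s hcon
    simp only [mem_setOf_eq] at hs
    linarith

include hFc hFs hF0 hF1 hGc hGs hG0 hG1 hst in
lemma exists_good_coupling {U : Ω → ℝ} (hU : Measurable U)
    (hmap : μ.map U = volume.restrict (Ioo 0 1)) {t p : ℝ} (hp : p ∈ Ioo (0:ℝ) 1)
    (hL : Lb F G t < p) :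
    ∃ X Y : Ω → ℝ, OrderedCoupling μ F G X Y ∧
      t ≤ quantR (distFun μ (fun ω => X ω + Y ω)) p := by
  have hXcdf := cdf_of_qtl_comp hFc hFs hF0 hF1 hU hmap
  have haeIoo := ae_mem_Ioo hU hmap
  rcases le_or_gt (F (t/2)) p with hcase | hcase
  · -- comonotone coupling suffices
    have hcpl : OrderedCoupling μ F G (fun ω => qtl F (U ω)) (fun ω => qtl G (U ω)) := by
      refine ⟨hXcdf, cdf_of_qtl_comp hGc hGs hG0 hG1 hU hmap, ?_⟩
      filter_upwards [haeIoo] with ω hω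
      have h1 : G (qtl F (U ω)) ≤ U ω := by
        have h2 := hst (qtl F (U ω))
        rw [qtl_spec hFc hFs hF0 hF1 hω] at h2
        exact h2
      exact (le_qtl_iff hGc hGs hG0 hG1 hω).mpr h1
    refine ⟨_, _, hcpl, ?_⟩
    apply quantR_ge_of_small hFc hFs hF0 hF1 hGc hGs hG0 hG1 hst hcpl hp
    intro s hs
    calc distFun μ (fun ω => qtl F (U ω) + qtl G (U ω)) s ≤ F (s/2) :=
          coupling_H_le hcpl s
      _ ≤ F (t/2) := hFs.monotone (by linarith)
      _ ≤ p := hcase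
  · -- the interesting case : a = p
    set a := p with ha
    have ha0 : 0 < a := hp.1
    have haF : a < F (t/2) := hcase
    have haw : ∀ x, x ≤ t/2 → F x + G (t-x) - F (t-x) < a :=
      fun x hx => lt_of_le_of_lt (Lb_ge hFs hst hx) hL
    set τ := fun v => Kfn F G t a (rfn F G t a v) with hτ
    have hτIoo : ∀ v ∈ Ioo (0:ℝ) 1, τ v ∈ Ioo (0:ℝ) 1 := by
      intro v hv
      have hr := rfn_mem (F:=F) (t:=t) (a:=a) hGs hG0 hG1 hv
      constructor
      · exact lt_of_lt_of_le hr.1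
          (Kfn_hall hFc hFs hF0 hF1 hGc hGs hG0 hG1 hst ha0 haF haw hr)
      · exact Kfn_lt_one hFc hFs hF0 hF1 hGc hGs hG0 hG1 ha0 haF hr
    have horder_pt : ∀ v ∈ Ioo (0:ℝ) 1, qtl F v ≤ qtl G (τ v) := by
      intro v hv
      apply (le_qtl_iff hGc hGs hG0 hG1 (hτIoo v hv)).mpr
      have h1 : G (qtl F v) ≤ rfn F G t a v := by
        rw [rfn]
        split_ifs with hcond
        · apply hGs.monotone
          have h2 : qtl F v ≤ t/2 := (qtl_le_iff hFc hFs hF0 hF1 hv).mpr hcond.2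
          linarith
        · exact le_refl _
      have h2 : rfn F G t a v ≤ τ v :=
        Kfn_hall hFc hFs hF0 hF1 hGc hGs hG0 hG1 hst ha0 haF haw
          (rfn_mem hGs hG0 hG1 hv)
      linarith
    have hτmeas : Measurable (fun v => qtl G (τ v)) :=
      (qtl_measurable hGc hGs hG0 hG1).comp
        ((Kfn_measurable hFc hGc hGs hG0 hG1).comp (rfn_measurable hFc hFs hF0 hF1 hGc))
    have hYcdf : HasCDF μ (fun ω => qtl G (τ (U ω))) G := by
      constructor
      · exact hτmeas.comp hU
      · intro x
        show (μ {ω | qtl G (τ (U ω)) ≤ x}).toReal = G x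
        have hB : MeasurableSet {v : ℝ | qtl G (τ v) ≤ x} := hτmeas measurableSet_Iic
        have h1 : {ω | qtl G (τ (U ω)) ≤ x} = U ⁻¹' {v | qtl G (τ v) ≤ x} := rfl
        rw [h1, measure_preimage_of_map hU hmap hB]
        have hGx : G x ∈ Ioo (0:ℝ) 1 := ⟨F_pos hGs hG0 x, F_lt_one hGs hG1 x⟩
        have h2 : {v : ℝ | qtl G (τ v) ≤ x} ∩ Ioo 0 1 = {v | τ v ≤ G x} ∩ Ioo 0 1 := by
          ext v
          simp only [mem_inter_iff, mem_setOf_eq, mem_Ioo]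
          constructor
          · rintro ⟨h3, h4⟩
            exact ⟨(qtl_le_iff hGc hGs hG0 hG1 (hτIoo v h4)).mp h3, h4⟩
          · rintro ⟨h3, h4⟩
            exact ⟨(qtl_le_iff hGc hGs hG0 hG1 (hτIoo v h4)).mpr h3, h4⟩
        rw [h2]
        have h3 := pit hFc hFs hF0 hF1 hGc hGs hG0 hG1 hst ha0 haF haw hGx
        rw [hτ]
        rw [h3, ENNReal.toReal_ofReal (F_pos hGs hG0 x).le]
    have hcpl : OrderedCoupling μ F G (fun ω => qtl F (U ω)) (fun ω => qtl G (τ (U ω))) := by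
      refine ⟨hXcdf, hYcdf, ?_⟩
      filter_upwards [haeIoo] with ω hω
      exact horder_pt (U ω) hω
    refine ⟨_, _, hcpl, ?_⟩
    apply quantR_ge_of_small hFc hFs hF0 hF1 hGc hGs hG0 hG1 hst hcpl hp
    intro s hs
    show (μ {ω | qtl F (U ω) + qtl G (τ (U ω)) ≤ s}).toReal ≤ p
    have hsub : {ω | qtl F (U ω) + qtl G (τ (U ω)) ≤ s} ⊆
        U ⁻¹' (Ioc 0 p ∪ (Ioo 0 1)ᶜ) := by
      intro ω hω
      simp only [mem_setOf_eq] at hω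
      simp only [mem_preimage, mem_union, mem_Ioc, mem_compl_iff]
      by_cases hIoo : U ω ∈ Ioo (0:ℝ) 1
      · left
        refine ⟨hIoo.1, ?_⟩
        by_contra hcon
        push_neg at hcon
        -- p < U ω : show the sum exceeds s
        set v := U ω with hv
        rcases le_or_gt v (F (t/2)) with h1 | h1
        · -- middle block
          have hr : rfn F G t a v = G (t - qtl F v) := by
            rw [rfn, if_pos ⟨hcon, h1⟩]
          have h2 : G (t - qtl F v) ≤ τ v := by
            rw [← hr]
            exact Kfn_hall hFc hFs hF0 hF1 hGc hGs hG0 hG1 hst ha0 haF haw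
              (rfn_mem hGs hG0 hG1 hIoo)
          have h3 : t - qtl F v ≤ qtl G (τ v) :=
            (le_qtl_iff hGc hGs hG0 hG1 (hτIoo v hIoo)).mpr h2
          linarith
        · -- top block
          have h2 : t/2 < qtl F v := by
            rw [lt_qtl_iff hFc hFs hF0 hF1 hIoo]
            exact h1
          have h3 := horder_pt v hIoo
          linarith
      · right; exact hIoo
    have hmeasB : MeasurableSet (Ioc (0:ℝ) p ∪ (Ioo (0:ℝ) 1)ᶜ) :=
      measurableSet_Ioc.union measurableSet_Ioo.compl
    have h4 : μ (U ⁻¹' (Ioc 0 p ∪ (Ioo 0 1)ᶜ)) = volume ((Ioc 0 p ∪ (Ioo 0 1)ᶜ) ∩ Ioo 0 1) :=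
      measure_preimage_of_map hU hmap hmeasB
    have h5 : ((Ioc (0:ℝ) p ∪ (Ioo (0:ℝ) 1)ᶜ) ∩ Ioo 0 1) ⊆ Ioc 0 p := by
      rintro u ⟨hu1 | hu1, hu2⟩
      · exact hu1
      · exact absurd hu2 hu1
    have h6 : μ {ω | qtl F (U ω) + qtl G (τ (U ω)) ≤ s} ≤ ENNReal.ofReal p := by
      calc μ {ω | qtl F (U ω) + qtl G (τ (U ω)) ≤ s}
          ≤ μ (U ⁻¹' (Ioc 0 p ∪ (Ioo 0 1)ᶜ)) := measure_mono hsub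
        _ = volume ((Ioc 0 p ∪ (Ioo 0 1)ᶜ) ∩ Ioo 0 1) := h4
        _ ≤ volume (Ioc 0 p) := measure_mono h5
        _ = ENNReal.ofReal p := by rw [Real.volume_Ioc, sub_zero]
    calc (μ {ω | qtl F (U ω) + qtl G (τ (U ω)) ≤ s}).toReal
        ≤ (ENNReal.ofReal p).toReal := ENNReal.toReal_mono ENNReal.ofReal_ne_top h6
      _ = p := ENNReal.toReal_ofReal hp.1.le

end excoupling

end WVC

/-- For strictly increasing continuous marginal cdfs, the worst-case right
Value-at-Risk over the order-constrained set is continuous in `p` on `(0,1)`. -/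
theorem worst_VaRR_continuous
    (μ : Measure Ω) [IsProbabilityMeasure μ] (hμ : Atomless μ)
    (F G : ℝ → ℝ) (hF : IsCDF F) (hG : IsCDF G)
    (hFc : Continuous F) (hGc : Continuous G)
    (hFs : StrictMono F) (hGs : StrictMono G) (hst : StOrder F G) :
    ContinuousOn (fun p : ℝ =>
        sSup {r : ℝ | ∃ X Y : Ω → ℝ, OrderedCoupling μ F G X Y ∧
          r = quantR (distFun μ (fun ω => X ω + Y ω)) p})
      (Set.Ioo 0 1) := by
  have hF0 : Tendsto F atBot (nhds 0) := hF.tendsto_atBot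
  have hF1 : Tendsto F atTop (nhds 1) := hF.tendsto_atTop
  have hG0 : Tendsto G atBot (nhds 0) := hG.tendsto_atBot
  have hG1 : Tendsto G atTop (nhds 1) := hG.tendsto_atTop
  have hst' : ∀ x, G x ≤ F x := hst
  by_cases hex : ∃ X Y : Ω → ℝ, OrderedCoupling μ F G X Y
  · obtain ⟨X₀, Y₀, hcpl₀⟩ := hex
    have hU : Measurable fun ω => G (Y₀ ω) := hGc.measurable.comp hcpl₀.2.1.1
    have hmap : μ.map (fun ω => G (Y₀ ω)) = volume.restrict (Ioo 0 1) :=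
      WVC.map_uniform hGc hGs hG0 hG1 hcpl₀.2.1
    have hkey : ∀ p ∈ Ioo (0:ℝ) 1,
        sSup {r : ℝ | ∃ X Y : Ω → ℝ, OrderedCoupling μ F G X Y ∧
          r = quantR (distFun μ (fun ω => X ω + Y ω)) p} = WVC.Vb F G p := by
      intro p hp
      set S := {r : ℝ | ∃ X Y : Ω → ℝ, OrderedCoupling μ F G X Y ∧
          r = quantR (distFun μ (fun ω => X ω + Y ω)) p} with hS
      have hub : ∀ r ∈ S, r ≤ WVC.Vb F G p := by
        rintro r ⟨X, Y, hcpl, rfl⟩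
        exact WVC.coupling_quantR_le_Vb hFc hFs hF0 hF1 hGc hGs hG0 hG1 hst' hcpl hp
      have hbdd : BddAbove S := ⟨WVC.Vb F G p, hub⟩
      have hne : S.Nonempty := ⟨_, X₀, Y₀, hcpl₀, rfl⟩
      apply le_antisymm (csSup_le hne hub)
      by_contra hcon
      push_neg at hcon
      set t := (sSup S + WVC.Vb F G p)/2 with ht
      set t' := (t + WVC.Vb F G p)/2 with ht'
      have htlt : t < t' := by simp only [ht, ht']; linarith
      have ht'lt : t' < WVC.Vb F G p := by simp only [ht, ht']; linarith
      have hLt' : WVC.Lb F G t' ≤ p :=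
        WVC.Lb_le_of_lt_Vb hFc hFs hF0 hF1 hst' hp ht'lt
      have hLt : WVC.Lb F G t < p :=
        lt_of_lt_of_le
          (WVC.Lb_strictMono hFc hFs hF0 hF1 hGc hGs hG0 hG1 hst' htlt) hLt'
      obtain ⟨X, Y, hcpl, hq⟩ :=
        WVC.exists_good_coupling hFc hFs hF0 hF1 hGc hGs hG0 hG1 hst' hU hmap hp hLt
      have hmem : quantR (distFun μ (fun ω => X ω + Y ω)) p ∈ S := ⟨X, Y, hcpl, rfl⟩
      have : t ≤ sSup S := le_trans hq (le_csSup hbdd hmem)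
      simp only [ht] at this
      linarith
    apply ContinuousOn.congr (f := WVC.Vb F G)
    · intro p hp
      exact (WVC.Vb_continuousAt hFc hFs hF0 hF1 hGc hGs hG0 hG1 hst' hp).continuousWithinAt
    · intro p hp
      exact hkey p hp
  · have hempty : ∀ p : ℝ, {r : ℝ | ∃ X Y : Ω → ℝ, OrderedCoupling μ F G X Y ∧
        r = quantR (distFun μ (fun ω => X ω + Y ω)) p} = ∅ := by
      intro p
      ext r
      simp only [mem_setOf_eq, mem_empty_iff_false, iff_false]
      rintro ⟨X, Y, hcpl, _⟩
      exact hex ⟨X, Y, hcpl⟩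
    apply ContinuousOn.congr (continuousOn_const (c := sSup (∅ : Set ℝ)))
    intro p hp
    simp only
    rw [hempty p]
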